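/- Let n ≥ 2 and d ≥ 1 with d² | n-1, and fix b with gcd(b,d)=1 and s with s·b ≡ 1 (mod d). In the Mukai lattice of a K3 surface (H*(S,ℤ) with pairing ((r,c,s),(r',c',s')) = (c,c') - rs' - r's), let v = (0, dλ, s) where λ has (λ,λ) = (2n-2)/d². Then a Mukai vector (r, c, t) is orthogonal to v if and only if r·s = d·(c, λ); and for every such vector, d divides r. Consequently the divisibility of the class (0,0,1) ∈ v^⊥ (i.e. gcd of its pairings with all elements of v^⊥) equals d. -/

import Mathlib

/-- The Mukai pairing on `ℤ ⊕ H² ⊕ ℤ`: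
`((r,c,s),(r',c',s')) = (c,c') - r·s' - r'·s`. -/
def mukaiPair {H : Type*} [AddCommGroup H] [Module ℤ H]
    (B : H →ₗ[ℤ] H →ₗ[ℤ] ℤ) (x y : ℤ × H × ℤ) : ℤ :=
  B x.2.1 y.2.1 - x.1 * y.2.2 - y.1 * x.2.2

/-- A primitive vector in a finite free ℤ-module admits a linear functional
taking the value `1` on it. -/
lemma exists_dual_one {H : Type*} [AddCommGroup H] [Module ℤ H]
    [Module.Free ℤ H] [Module.Finite ℤ H] (lam : H)
    (hlamprim : ∀ (k : ℤ) (y : H), lam = k • y → IsUnit k) :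
    ∃ φ : H →ₗ[ℤ] ℤ, φ lam = 1 := by
  classical
  let bb := Module.Free.chooseBasis ℤ H
  set a : _ → ℤ := fun i => bb.repr lam i with ha
  obtain ⟨g, hg⟩ := (IsPrincipalIdealRing.principal (Ideal.span (Set.range a))).principal
  have hgdvd : ∀ i, g ∣ a i := by
    intro i
    have h1 : a i ∈ Ideal.span (Set.range a) := Ideal.subset_span ⟨i, rfl⟩
    rw [hg] at h1
    exact Ideal.mem_span_singleton.mp h1
  have hgu : IsUnit g := by
    refine hlamprim g (bb.repr.symm (Finsupp.mapRange (· / g) (Int.zero_ediv g) (bb.repr lam))) ?_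
    apply bb.repr.injective
    rw [map_zsmul, LinearEquiv.apply_symm_apply]
    ext i
    rw [← Int.cast_smul_eq_zsmul ℤ, Int.cast_id, Finsupp.smul_apply, Finsupp.mapRange_apply,
      smul_eq_mul, Int.mul_ediv_cancel' (hgdvd i)]
  have hgmem : g ∈ Ideal.span (Set.range a) := by
    rw [hg]; exact Submodule.mem_span_singleton_self g
  rw [Ideal.span, Submodule.mem_span_range_iff_exists_fun] at hgmem
  obtain ⟨cc, hcc⟩ := hgmem
  refine ⟨g • ∑ i, cc i • bb.coord i, ?_⟩
  have h1 : (∑ i, cc i • bb.coord i) lam = g := by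
    rw [LinearMap.sum_apply]
    simpa [LinearMap.smul_apply, Module.Basis.coord_apply, smul_eq_mul] using hcc
  rcases Int.isUnit_iff.mp hgu with h | h <;>
    simp [LinearMap.smul_apply, h1, h]

/-- Let `n ≥ 2`, `d ≥ 1` with `d² ∣ n-1`, `gcd(b,d) = 1` and `s·b ≡ 1 (mod d)`.  In the
Mukai lattice of a K3 surface, with `v = (0, d•λ, s)` and `(λ,λ) = (2n-2)/d²`, a Mukai
vector `(r,c,t)` is orthogonal to `v` iff `r·s = d·(c,λ)`; for every such vector `d ∣ r`;
and consequently the divisibility of `(0,0,1) ∈ v^⊥` equals `d`. -/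
theorem stmt_16 (H : Type*) [AddCommGroup H] [Module ℤ H]
    [Module.Free ℤ H] [Module.Finite ℤ H]
    (B : H →ₗ[ℤ] H →ₗ[ℤ] ℤ) (hsymm : ∀ x y, B x y = B y x)
    (hunimod : Function.Bijective (fun x : H => B x))
    (n d b s : ℤ) (hn : 2 ≤ n) (hd : 1 ≤ d) (hdvd : d ^ 2 ∣ n - 1)
    (hbd : IsCoprime b d) (hsb : d ∣ s * b - 1)
    (lam : H) (hlamprim : ∀ (k : ℤ) (y : H), lam = k • y → IsUnit k)
    (hlam : B lam lam = 2 * (n - 1) / d ^ 2) :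
    (∀ (r : ℤ) (c : H) (t : ℤ),
        mukaiPair B (r, c, t) (0, d • lam, s) = 0 ↔ r * s = d * B c lam) ∧
    (∀ (r : ℤ) (c : H) (t : ℤ),
        mukaiPair B (r, c, t) (0, d • lam, s) = 0 → d ∣ r) ∧
    (∀ (r : ℤ) (c : H) (t : ℤ),
        mukaiPair B (r, c, t) (0, d • lam, s) = 0 →
          d ∣ mukaiPair B (0, (0 : H), 1) (r, c, t)) ∧
    (∃ (r : ℤ) (c : H) (t : ℤ),
        mukaiPair B (r, c, t) (0, d • lam, s) = 0 ∧
        mukaiPair B (0, (0 : H), 1) (r, c, t) = d) := by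
  have hpair : ∀ (r : ℤ) (c : H) (t : ℤ),
      mukaiPair B (r, c, t) (0, d • lam, s) = d * B c lam - r * s := by
    intro r c t
    simp [mukaiPair, map_smul, smul_eq_mul]
  have hiff : ∀ (r : ℤ) (c : H) (t : ℤ),
      mukaiPair B (r, c, t) (0, d • lam, s) = 0 ↔ r * s = d * B c lam := by
    intro r c t
    rw [hpair]
    constructor <;> intro h <;> linarith
  have hcop : IsCoprime d s := by
    obtain ⟨k, hk⟩ := hsb
    exact ⟨-k, b, by linarith⟩
  have hdr : ∀ (r : ℤ) (c : H) (t : ℤ),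
      mukaiPair B (r, c, t) (0, d • lam, s) = 0 → d ∣ r := by
    intro r c t h
    have h' := (hiff r c t).mp h
    exact hcop.dvd_of_dvd_mul_right ⟨B c lam, h'⟩
  refine ⟨hiff, hdr, ?_, ?_⟩
  · intro r c t h
    have hr := hdr r c t h
    have : mukaiPair B (0, (0 : H), 1) (r, c, t) = -r := by
      simp [mukaiPair]
    rw [this]
    exact dvd_neg.mpr hr
  · obtain ⟨φ, hφ⟩ := exists_dual_one lam hlamprim
    obtain ⟨c, hc⟩ := hunimod.2 ((-s) • φ)
    have hBc : B c lam = -s := by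
      have := congrArg (fun ψ => ψ lam) hc
      simpa [hφ] using this
    refine ⟨-d, c, 0, ?_, ?_⟩
    · rw [hpair, hBc]; ring
    · simp [mukaiPair]
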